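/- Cardinality bound for the Walsh hyperbolic cross: let b ≥ 2 be an integer, α > 1/2, γ₁,…,γ_d ∈ [0,1], M ≥ 1, and define ř(h) = Π_{j : hⱼ≠0} b^{α μ₁(hⱼ)}/γⱼ for h ∈ ℕ₀^d, where μ₁(h) is the one-based position of the most significant nonzero base-b digit of h. Then for any λ ∈ (1/(2α), 1], the set Ǎ_d(M) = {h ∈ ℕ₀^d : ř(h)² ≤ M} satisfies |Ǎ_d(M)| ≤ M^λ · Π_{j=1}^d (1 + γⱼ^{2λ}·(b−1)/(b^{2αλ} − b)). -/

import Mathlib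

open Finset
open scoped ENNReal

/-- `μ₁(0) = 0`, and `μ₁(h)` is the one-based position of the most significant
nonzero base-`b` digit of `h`. -/
def mu1 (b h : ℕ) : ℕ := (Nat.digits b h).length

/-- The weighted Walsh weight `ř(h) = Π_{j : hⱼ≠0} b^{α μ₁(hⱼ)}/γⱼ`, valued in `ℝ≥0∞`
(`ř(h) = ∞` when some `γⱼ = 0` and `hⱼ ≠ 0`; `ř(0) = 1`). -/
noncomputable def walshCrossWeight (b d : ℕ) (α : ℝ) (γ : Fin d → ℝ)
    (h : Fin d → ℕ) : ℝ≥0∞ :=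
  ∏ j ∈ Finset.univ.filter (fun j => h j ≠ 0),
    ((b : ℝ≥0∞) ^ (α * (mu1 b (h j) : ℝ)) / ENNReal.ofReal (γ j))

lemma prod_rpow_ne_zero' {ι : Type*} (s : Finset ι) (f : ι → ℝ≥0∞)
    (hf : ∀ i ∈ s, f i ≠ 0) (z : ℝ) :
    (∏ i ∈ s, f i) ^ z = ∏ i ∈ s, f i ^ z := by
  classical
  induction s using Finset.induction_on with
  | empty => simp
  | @insert a s ha ih =>
    rw [Finset.prod_insert ha, Finset.prod_insert ha,
      ENNReal.mul_rpow_of_ne_zero (hf a (Finset.mem_insert_self a s))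
        (Finset.prod_ne_zero_iff.mpr fun i hi => hf i (Finset.mem_insert_of_mem hi)),
      ih fun i hi => hf i (Finset.mem_insert_of_mem hi)]

lemma tsum_pi_nat : ∀ {d : ℕ} (t : Fin d → ℕ → ℝ≥0∞),
    ∑' h : Fin d → ℕ, ∏ j, t j (h j) = ∏ j, ∑' m, t j m := by
  intro d
  induction d with
  | zero =>
    intro t
    simp only [Finset.univ_eq_empty, Finset.prod_empty]
    rw [tsum_eq_single (fun i => i.elim0)]
    intro b' hb'
    exact absurd (funext fun i => i.elim0) hb'
  | succ n ih =>
    intro t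
    rw [← (Fin.consEquiv (fun _ : Fin (n+1) => ℕ)).tsum_eq]
    have : ∀ p : ℕ × (Fin n → ℕ),
        (∏ j, t j ((Fin.consEquiv (fun _ : Fin (n+1) => ℕ)) p j)) =
          t 0 p.1 * ∏ j : Fin n, t j.succ (p.2 j) := by
      intro p
      rw [Fin.prod_univ_succ]
      simp [Fin.consEquiv]
    rw [tsum_congr this, ENNReal.tsum_prod']
    simp only [ENNReal.tsum_mul_left, ENNReal.tsum_mul_right]
    rw [ih, Fin.prod_univ_succ]

lemma sum_mu1_range_pow (b : ℕ) (hb : 2 ≤ b) (q : ℝ≥0∞) (L : ℕ) :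
    ∑ m ∈ Finset.range (b ^ L), (if m = 0 then 0 else q ^ (mu1 b m)) =
      ∑ ℓ ∈ Finset.range L, (((b-1) * b^ℓ : ℕ) : ℝ≥0∞) * q ^ (ℓ+1) := by
  induction L with
  | zero => simp
  | succ L ih =>
    have h1 : b ^ L ≤ b ^ (L+1) := Nat.pow_le_pow_right (by omega) (by omega)
    rw [Finset.range_eq_Ico, ← Finset.sum_Ico_consecutive _ (Nat.zero_le _) h1,
      ← Finset.range_eq_Ico, ih, Finset.sum_range_succ]
    congr 1
    have hc : ∀ m ∈ Finset.Ico (b^L) (b^(L+1)),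
        (if m = 0 then (0:ℝ≥0∞) else q ^ mu1 b m) = q^(L+1) := by
      intro m hm
      simp only [Finset.mem_Ico] at hm
      have hm0 : m ≠ 0 := by
        have : 1 ≤ b ^ L := Nat.one_le_pow _ _ (by omega)
        omega
      rw [if_neg hm0]
      congr 1
      rw [mu1, Nat.digits_len b m (by omega) hm0,
        Nat.log_eq_of_pow_le_of_lt_pow hm.1 hm.2]
    rw [Finset.sum_congr rfl hc, Finset.sum_const, Nat.card_Ico, nsmul_eq_mul]
    congr 2
    have h2 : (b-1) * b^L = b^(L+1) - b^L := by
      have : 1 ≤ b ^ L := Nat.one_le_pow _ _ (by omega)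
      rw [pow_succ]
      cases b with
      | zero => omega
      | succ c => rw [Nat.succ_sub_one]; ring_nf; omega
    omega

lemma mu1_lt_pow (b m : ℕ) (hb : 2 ≤ b) : m < b ^ (mu1 b m) :=
  Nat.lt_base_pow_length_digits (by omega)

lemma tsum_mu1_le (b : ℕ) (hb : 2 ≤ b) (q : ℝ≥0∞) :
    ∑' m : ℕ, (if m = 0 then 0 else q ^ (mu1 b m)) ≤
      (((b-1 : ℕ)) : ℝ≥0∞) * q * (1 - (b : ℝ≥0∞) * q)⁻¹ := by
  rw [ENNReal.tsum_eq_iSup_sum]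
  apply iSup_le
  intro F
  set L := F.sup (mu1 b) with hL
  have hFsub : F ⊆ Finset.range (b ^ L) := by
    intro m hm
    rw [Finset.mem_range]
    exact lt_of_lt_of_le (mu1_lt_pow b m hb)
      (Nat.pow_le_pow_right (by omega) (Finset.le_sup hm))
  calc ∑ m ∈ F, (if m = 0 then 0 else q ^ (mu1 b m))
      ≤ ∑ m ∈ Finset.range (b ^ L), (if m = 0 then 0 else q ^ (mu1 b m)) :=
        Finset.sum_le_sum_of_subset hFsub
    _ = ∑ ℓ ∈ Finset.range L, (((b-1) * b^ℓ : ℕ) : ℝ≥0∞) * q ^ (ℓ+1) :=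
        sum_mu1_range_pow b hb q L
    _ ≤ ∑' ℓ : ℕ, (((b-1) * b^ℓ : ℕ) : ℝ≥0∞) * q ^ (ℓ+1) := ENNReal.sum_le_tsum _
    _ = ((b-1 : ℕ) : ℝ≥0∞) * q * (1 - (b : ℝ≥0∞) * q)⁻¹ := by
        have hc : ∀ ℓ : ℕ, (((b-1) * b^ℓ : ℕ) : ℝ≥0∞) * q ^ (ℓ+1) =
            ((b-1 : ℕ) : ℝ≥0∞) * q * ((b : ℝ≥0∞) * q) ^ ℓ := by
          intro ℓ
          push_cast
          rw [mul_pow, pow_succ]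
          ring
        rw [tsum_congr hc, ENNReal.tsum_mul_left, ENNReal.tsum_geometric]

/-- Cardinality bound for the Walsh hyperbolic cross
`Ǎ_d(M) = {h ∈ ℕ₀^d : ř(h)² ≤ M}`:
`|Ǎ_d(M)| ≤ M^λ Π_j (1 + γⱼ^{2λ}(b−1)/(b^{2αλ}−b))` for any `λ ∈ (1/(2α), 1]`. -/
theorem walsh_hyperbolic_cross_cardinality_bound (b d : ℕ) (hb : 2 ≤ b)
    (α : ℝ) (hα : 1 / 2 < α)
    (γ : Fin d → ℝ) (hγ0 : ∀ j, 0 ≤ γ j) (hγ1 : ∀ j, γ j ≤ 1)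
    (M : ℝ) (hM : 1 ≤ M) (l : ℝ) (hl : 1 / (2 * α) < l) (hl1 : l ≤ 1) :
    (setOf (fun h : Fin d → ℕ =>
        (walshCrossWeight b d α γ h) ^ 2 ≤ ENNReal.ofReal M)).Finite ∧
    ((setOf (fun h : Fin d → ℕ =>
        (walshCrossWeight b d α γ h) ^ 2 ≤ ENNReal.ofReal M)).ncard : ℝ) ≤
      M ^ l * ∏ j, (1 + γ j ^ (2 * l) *
        (((b : ℝ) - 1) / ((b : ℝ) ^ (2 * α * l) - (b : ℝ)))) := by

  -- basic positivity facts
  have hα0 : (0:ℝ) < α := by linarith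
  have h2α : (0:ℝ) < 2 * α := by linarith
  have hl0 : (0:ℝ) < l := lt_trans (by positivity) hl
  have h2αl : (1:ℝ) < 2 * α * l := by
    have h := (div_lt_iff₀ h2α).mp hl
    linarith
  have hb1 : (1:ℝ) < (b:ℝ) := by exact_mod_cast (by omega : 1 < b)
  have hb0 : (0:ℝ) < (b:ℝ) := by linarith
  set P : ℝ := (b:ℝ) ^ (2 * α * l) with hPdef
  have hP0 : (0:ℝ) < P := Real.rpow_pos_of_pos hb0 _
  have hPb : (b:ℝ) < P := by
    have : (b:ℝ) ^ (1:ℝ) < (b:ℝ) ^ (2*α*l) :=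
      Real.rpow_lt_rpow_of_exponent_lt hb1 h2αl
    rwa [Real.rpow_one] at this
  set q : ℝ≥0∞ := ENNReal.ofReal P⁻¹ with hqdef
  have hbE0 : (b:ℝ≥0∞) ≠ 0 := by
    simp only [ne_eq, Nat.cast_eq_zero]; omega
  have hbEtop : (b:ℝ≥0∞) ≠ ⊤ := ENNReal.natCast_ne_top b
  -- the coordinate terms
  set t : Fin d → ℕ → ℝ≥0∞ := fun j m =>
    if m = 0 then 1 else (ENNReal.ofReal (γ j)) ^ (2*l) * q ^ (mu1 b m) with htdef
  set r : (Fin d → ℕ) → ℝ≥0∞ := walshCrossWeight b d α γ with hrdef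
  set A : Set (Fin d → ℕ) := setOf (fun h => r h ^ 2 ≤ ENNReal.ofReal M) with hAdef
  -- each factor of the weight is nonzero
  have hfac0 : ∀ (h : Fin d → ℕ) (j : Fin d),
      ((b : ℝ≥0∞) ^ (α * (mu1 b (h j) : ℝ)) / ENNReal.ofReal (γ j)) ≠ 0 := by
    intro h j
    rw [ne_eq, ENNReal.div_eq_zero_iff]
    push_neg
    exact ⟨(ENNReal.rpow_pos (by positivity) hbEtop).ne', ENNReal.ofReal_ne_top⟩
  have hr0 : ∀ h, r h ≠ 0 := by
    intro h
    exact Finset.prod_ne_zero_iff.mpr fun j _ => hfac0 h j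
  -- factorization of r h ^ (-(2*l))
  have hfact : ∀ h : Fin d → ℕ, r h ^ (-(2*l)) = ∏ j, t j (h j) := by
    intro h
    rw [hrdef, walshCrossWeight,
      prod_rpow_ne_zero' _ _ (fun j _ => hfac0 h j) (-(2*l))]
    rw [Finset.prod_filter]
    apply Finset.prod_congr rfl
    intro j _
    by_cases hj : h j = 0
    · simp [htdef, hj]
    · rw [if_pos hj, htdef]
      simp only [hj, if_false]
      rw [div_eq_mul_inv,
        ENNReal.mul_rpow_of_ne_zero (ENNReal.rpow_pos (by positivity) hbEtop).ne'
          (ENNReal.inv_ne_zero.mpr ENNReal.ofReal_ne_top)]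
      rw [mul_comm (ENNReal.ofReal (γ j) ^ (2*l))]
      congr 1
      · rw [← ENNReal.rpow_mul]
        have he : α * (mu1 b (h j) : ℝ) * -(2*l) = -(2*α*l) * (mu1 b (h j) : ℝ) := by
          ring
        rw [he, ENNReal.rpow_mul, ENNReal.rpow_natCast]
        congr 1
        rw [← ENNReal.ofReal_natCast b,
          ENNReal.ofReal_rpow_of_pos hb0, Real.rpow_neg hb0.le, hqdef]
      · rw [ENNReal.rpow_neg, ENNReal.inv_rpow, inv_inv]
  -- pointwise bound on A
  have hA1 : ∀ h ∈ A, 1 ≤ ENNReal.ofReal M ^ l * r h ^ (-(2*l)) := by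
    intro h hh
    have hx : r h ^ 2 ≤ ENNReal.ofReal M := hh
    have hRtop : r h ≠ ⊤ := by
      intro hR
      rw [hR] at hx
      rw [ENNReal.top_pow (by norm_num), top_le_iff] at hx
      exact ENNReal.ofReal_ne_top hx
    have h2l : r h ^ (2*l) ≤ ENNReal.ofReal M ^ l := by
      have he : r h ^ (2*l) = (r h ^ (2:ℕ)) ^ l := by
        rw [← ENNReal.rpow_natCast (r h) 2, ← ENNReal.rpow_mul]
        norm_num
      rw [he]
      exact ENNReal.rpow_le_rpow hx hl0.le
    have hone : (1:ℝ≥0∞) = r h ^ (2*l) * r h ^ (-(2*l)) := by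
      rw [← ENNReal.rpow_add _ _ (hr0 h) hRtop]
      simp
    calc (1:ℝ≥0∞) = r h ^ (2*l) * r h ^ (-(2*l)) := hone
      _ ≤ ENNReal.ofReal M ^ l * r h ^ (-(2*l)) := mul_le_mul_left h2l _
  -- main chain in ℝ≥0∞
  have key : ∑' x : A, (1:ℝ≥0∞) ≤ ENNReal.ofReal M ^ l * ∏ j, ∑' m, t j m := by
    calc ∑' x : A, (1:ℝ≥0∞)
        ≤ ∑' x : A, ENNReal.ofReal M ^ l * r x ^ (-(2*l)) :=
          ENNReal.tsum_le_tsum fun x => hA1 x x.2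
      _ ≤ ∑' h : Fin d → ℕ, ENNReal.ofReal M ^ l * r h ^ (-(2*l)) :=
          ENNReal.tsum_comp_le_tsum_of_injective Subtype.val_injective _
      _ = ENNReal.ofReal M ^ l * ∑' h : Fin d → ℕ, r h ^ (-(2*l)) :=
          ENNReal.tsum_mul_left
      _ = ENNReal.ofReal M ^ l * ∏ j, ∑' m, t j m := by
          rw [tsum_congr hfact, tsum_pi_nat]
  -- per-coordinate sum bound
  have hcnn : (0:ℝ) ≤ ((b:ℝ) - 1) / (P - (b:ℝ)) := by
    apply div_nonneg <;> linarith
  have hper : ∀ j, ∑' m : ℕ, t j m ≤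
      ENNReal.ofReal (1 + γ j ^ (2*l) * (((b:ℝ) - 1) / (P - (b:ℝ)))) := by
    intro j
    have split : ∀ m : ℕ, t j m = (if m = 0 then 1 else 0) +
        ENNReal.ofReal (γ j) ^ (2*l) * (if m = 0 then 0 else q ^ (mu1 b m)) := by
      intro m
      by_cases hm : m = 0 <;> simp [htdef, hm]
    rw [tsum_congr split, ENNReal.tsum_add, ENNReal.tsum_mul_left, tsum_ite_eq]
    have hT := tsum_mu1_le b hb q
    have hq1 : (b:ℝ≥0∞) * q = ENNReal.ofReal ((b:ℝ) * P⁻¹) := by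
      rw [ENNReal.ofReal_mul hb0.le, ENNReal.ofReal_natCast]
    have hbP1 : (b:ℝ) * P⁻¹ < 1 := by
      rw [← div_eq_mul_inv]
      exact (div_lt_one hP0).mpr hPb
    have hbPnn : (0:ℝ) ≤ (b:ℝ) * P⁻¹ := by positivity
    have hTbound : (((b-1:ℕ)) : ℝ≥0∞) * q * (1 - (b:ℝ≥0∞) * q)⁻¹ =
        ENNReal.ofReal (((b:ℝ) - 1) / (P - (b:ℝ))) := by
      rw [hq1, ← ENNReal.ofReal_one, ← ENNReal.ofReal_sub _ hbPnn,
        ← ENNReal.ofReal_inv_of_pos (by linarith), hqdef]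
      have hcast : (((b-1:ℕ)) : ℝ≥0∞) = ENNReal.ofReal ((b:ℝ) - 1) := by
        rw [← ENNReal.ofReal_natCast]
        congr 1
        push_cast [Nat.cast_sub (by omega : 1 ≤ b)]
        ring
      rw [hcast, ← ENNReal.ofReal_mul (by linarith), ← ENNReal.ofReal_mul (mul_nonneg (by linarith) (by positivity))]
      congr 1
      have h1 : P - (b:ℝ) ≠ 0 := by linarith
      have h2 : (1 - (b:ℝ) * P⁻¹) = (P - b)/P := by field_simp
      rw [h2]
      field_simp
    have hg : ENNReal.ofReal (γ j) ^ (2*l) = ENNReal.ofReal (γ j ^ (2*l)) :=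
      ENNReal.ofReal_rpow_of_nonneg (hγ0 j) (by linarith)
    calc 1 + ENNReal.ofReal (γ j) ^ (2*l) * ∑' m : ℕ, (if m = 0 then 0 else q ^ (mu1 b m))
        ≤ 1 + ENNReal.ofReal (γ j) ^ (2*l) *
            ((((b-1:ℕ)) : ℝ≥0∞) * q * (1 - (b:ℝ≥0∞) * q)⁻¹) :=
          add_le_add_right (mul_le_mul_right hT _) 1
      _ = ENNReal.ofReal (1 + γ j ^ (2*l) * (((b:ℝ) - 1) / (P - (b:ℝ)))) := by
          rw [hTbound, hg, ← ENNReal.ofReal_mul (Real.rpow_nonneg (hγ0 j) _),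
            ← ENNReal.ofReal_one, ← ENNReal.ofReal_add (by norm_num)
              (mul_nonneg (Real.rpow_nonneg (hγ0 j) _) hcnn)]
  -- assemble
  have hfacnn : ∀ j : Fin d, (0:ℝ) ≤ 1 + γ j ^ (2*l) * (((b:ℝ) - 1) / (P - (b:ℝ))) := by
    intro j
    have : (0:ℝ) ≤ γ j ^ (2*l) := Real.rpow_nonneg (hγ0 j) _
    nlinarith
  have hRHSnn : (0:ℝ) ≤ M ^ l * ∏ j, (1 + γ j ^ (2 * l) * (((b:ℝ) - 1) / (P - (b:ℝ)))) := by
    apply mul_nonneg (Real.rpow_nonneg (by linarith) _)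
    exact Finset.prod_nonneg fun j _ => hfacnn j
  have total : ∑' x : A, (1:ℝ≥0∞) ≤
      ENNReal.ofReal (M ^ l * ∏ j, (1 + γ j ^ (2 * l) * (((b:ℝ) - 1) / (P - (b:ℝ))))) := by
    calc ∑' x : A, (1:ℝ≥0∞) ≤ ENNReal.ofReal M ^ l * ∏ j, ∑' m, t j m := key
      _ ≤ ENNReal.ofReal M ^ l *
          ∏ j, ENNReal.ofReal (1 + γ j ^ (2*l) * (((b:ℝ) - 1) / (P - (b:ℝ)))) :=
          mul_le_mul_right (Finset.prod_le_prod' fun j _ => hper j) _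
      _ = _ := by
          rw [← ENNReal.ofReal_prod_of_nonneg fun j _ => hfacnn j,
            ENNReal.ofReal_rpow_of_pos (by linarith),
            ← ENNReal.ofReal_mul (Real.rpow_nonneg (by linarith) _)]
  -- finiteness
  have hfin : A.Finite := by
    by_contra hinf
    haveI : Infinite A := Set.infinite_coe_iff.mpr hinf
    rw [ENNReal.tsum_const_eq_top_of_ne_zero one_ne_zero] at total
    exact ENNReal.ofReal_ne_top (top_le_iff.mp total)
  refine ⟨hfin, ?_⟩
  haveI : Fintype A := hfin.fintype
  have hcard : ∑' x : A, (1:ℝ≥0∞) = (A.ncard : ℝ≥0∞) := by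
    rw [tsum_fintype, Finset.sum_const, Finset.card_univ, nsmul_eq_mul, mul_one]
    congr 1
    rw [Set.ncard_eq_toFinset_card', Set.toFinset_card]
  rw [hcard] at total
  rw [← ENNReal.ofReal_natCast] at total
  exact (ENNReal.ofReal_le_ofReal_iff hRHSnn).mp total
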